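/- The intersection ∩_{j∈ℤ} V_j equals {0} in L²(ℚ_2, μ). -/

import Mathlib

open MeasureTheory
open scoped ENNReal NNReal

/-- The refinable function: the indicator of `ℤ_2` inside `ℚ_[2]`. -/
noncomputable def phi2 : ℚ_[2] → ℂ :=
  Set.indicator {x : ℚ_[2] | ‖x‖ ≤ 1} 1

/-- The set `I_2` of fractional-part representatives of `ℚ_2/ℤ_2`. -/
def I2 : Set ℚ_[2] :=
  {a | ∃ γ m : ℕ, m < 2 ^ γ ∧ a = (m : ℚ_[2]) / (2 : ℚ_[2]) ^ γ}

/-- The space `V_j`: the closed `ℂ`-linear span in `L²(ℚ_2, μ)` of the functions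
`x ↦ φ(2^{-j} x − a)`, `a ∈ I_2`. -/
noncomputable def Vsp [MeasurableSpace ℚ_[2]] (μ : Measure ℚ_[2]) (j : ℤ) :
    Submodule ℂ (Lp ℂ 2 μ) :=
  (Submodule.span ℂ {f : Lp ℂ 2 μ | ∃ a ∈ I2,
    (f : ℚ_[2] → ℂ) =ᵐ[μ] fun x => phi2 ((2 : ℚ_[2]) ^ (-j) * x - a)}).topologicalClosure

namespace VspAux

lemma norm_two : ‖(2 : ℚ_[2])‖ = 2⁻¹ := by
  have h := Padic.norm_p (p := 2)
  simpa using h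

lemma norm_two_zpow (k : ℤ) : ‖(2 : ℚ_[2]) ^ k‖ = (2 : ℝ) ^ (-k) := by
  rw [norm_zpow, norm_two, ← zpow_neg_one, ← zpow_mul]
  ring_nf

/-- `B(k) = {x : ‖x‖ ≤ 2^k}`. -/
def Bz (k : ℤ) : Set ℚ_[2] := {x | ‖x‖ ≤ (2 : ℝ) ^ k}

lemma Bz_eq_closedBall (k : ℤ) : Bz k = Metric.closedBall (0 : ℚ_[2]) ((2:ℝ)^k) := by
  ext x; simp [Bz, Metric.mem_closedBall, dist_eq_norm]

lemma measurableSet_Bz [MeasurableSpace ℚ_[2]] [BorelSpace ℚ_[2]] (k : ℤ) :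
    MeasurableSet (Bz k) := by
  rw [Bz_eq_closedBall]; exact measurableSet_closedBall

/-- 2-adic units are ≡ 1 mod 2. -/
lemma norm_sub_one_le {y : ℚ_[2]} (hy : ‖y‖ = 1) : ‖y - 1‖ ≤ 2⁻¹ := by
  set z : ℤ_[2] := ⟨y, hy.le⟩ with hz
  have hzy : (z : ℚ_[2]) = y := rfl
  have hznorm : ‖z‖ = 1 := by rw [PadicInt.norm_def, hzy, hy]
  have hznd : ¬ ((2 : ℤ_[2]) ∣ z) := by
    intro hdvd
    have := (PadicInt.norm_lt_one_iff_dvd z).mpr (by exact_mod_cast hdvd)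
    rw [hznorm] at this; exact lt_irrefl _ this
  have htz : PadicInt.toZMod z = 1 := by
    have h01 : ∀ c : ZMod 2, c = 0 ∨ c = 1 := by decide
    rcases h01 (PadicInt.toZMod z) with h | h
    · exfalso
      have : z ∈ RingHom.ker (PadicInt.toZMod (p := 2)) := by
        simpa [RingHom.mem_ker] using h
      rw [PadicInt.ker_toZMod, PadicInt.maximalIdeal_eq_span_p,
        Ideal.mem_span_singleton] at this
      exact hznd (by exact_mod_cast this)
    · exact h
  have hdvd1 : (2 : ℤ_[2]) ∣ (z - 1) := by
    have : (z - 1) ∈ RingHom.ker (PadicInt.toZMod (p := 2)) := by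
      simp [RingHom.mem_ker, map_sub, htz]
    rw [PadicInt.ker_toZMod, PadicInt.maximalIdeal_eq_span_p,
      Ideal.mem_span_singleton] at this
    exact_mod_cast this
  have hlt : ‖z - 1‖ < 1 := (PadicInt.norm_lt_one_iff_dvd _).mpr (by exact_mod_cast hdvd1)
  have hle : ‖z - 1‖ ≤ ((2:ℕ) : ℝ) ^ ((0:ℤ) - 1) := by
    rw [← PadicInt.norm_lt_pow_iff_norm_le_pow_sub_one]
    simpa using hlt
  have : ‖y - 1‖ = ‖z - 1‖ := by
    rw [PadicInt.norm_def]; push_cast [hzy]; ring_nf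
  rw [this]
  calc ‖z - 1‖ ≤ ((2:ℕ) : ℝ) ^ ((0:ℤ) - 1) := hle
    _ = 2⁻¹ := by norm_num

lemma norm_sub_le_of_between {k : ℤ} {x : ℚ_[2]}
    (h1 : ‖x‖ ≤ (2 : ℝ) ^ (k + 1)) (h2 : ¬ ‖x‖ ≤ (2 : ℝ) ^ k) :
    ‖x - (2 : ℚ_[2]) ^ (-(k + 1))‖ ≤ (2 : ℝ) ^ k := by
  have hxe : ‖x‖ = (2 : ℝ) ^ (k + 1) := by
    have h2' : (2:ℝ) ^ (k+1) ≤ ‖x‖ := by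
      by_contra hc; push_neg at hc
      exact h2 (by exact_mod_cast
        (Padic.norm_le_pow_iff_norm_lt_pow_add_one x k).mpr (by exact_mod_cast hc))
    linarith
  set t : ℚ_[2] := (2:ℚ_[2]) ^ (-(k+1)) with ht
  have htn : ‖t‖ = (2:ℝ) ^ (k+1) := by rw [ht, norm_two_zpow, neg_neg]
  set y : ℚ_[2] := x * (2:ℚ_[2]) ^ (k+1) with hy
  have hyn : ‖y‖ = 1 := by
    rw [hy, norm_mul, norm_two_zpow, hxe, ← zpow_add₀ (two_ne_zero (α := ℝ))]
    ring_nf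
    simp
  have hxy : x - t = (y - 1) * t := by
    rw [hy, ht, sub_mul, one_mul, mul_assoc, ← zpow_add₀ (two_ne_zero (α := ℚ_[2]))]
    ring_nf
    simp
  rw [hxy, norm_mul, htn]
  calc ‖y - 1‖ * (2:ℝ) ^ (k+1) ≤ 2⁻¹ * (2:ℝ) ^ (k+1) := by
        have := norm_sub_one_le hyn
        have hpos : (0:ℝ) < (2:ℝ) ^ (k+1) := by positivity
        nlinarith [norm_nonneg (y - 1)]
    _ = (2:ℝ) ^ k := by
        rw [← zpow_neg_one, ← zpow_add₀ (two_ne_zero (α := ℝ))]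
        norm_num


/-- The ball `C(j,a) = {x : ‖2^{-j} x - a‖ ≤ 1}`. -/
def Cb (j : ℤ) (a : ℚ_[2]) : Set ℚ_[2] := {x | ‖(2 : ℚ_[2]) ^ (-j) * x - a‖ ≤ 1}

lemma mem_Cb_iff {j : ℤ} {a x : ℚ_[2]} :
    x ∈ Cb j a ↔ ‖x - (2 : ℚ_[2]) ^ j * a‖ ≤ (2 : ℝ) ^ (-j) := by
  have hfact : (2 : ℚ_[2]) ^ (-j) * x - a
      = (2 : ℚ_[2]) ^ (-j) * (x - (2 : ℚ_[2]) ^ j * a) := by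
    rw [mul_sub, ← mul_assoc, ← zpow_add₀ (two_ne_zero (α := ℚ_[2]))]
    ring_nf
    simp
  have hpos : (0:ℝ) < (2:ℝ) ^ j := by positivity
  constructor
  · intro hx
    have hx' : ‖(2:ℚ_[2])^(-j) * (x - (2:ℚ_[2])^j * a)‖ ≤ 1 := by rwa [← hfact]
    rw [norm_mul, norm_two_zpow, neg_neg] at hx'
    rw [zpow_neg]
    calc ‖x - (2:ℚ_[2])^j * a‖
        = ((2:ℝ)^j)⁻¹ * ((2:ℝ)^j * ‖x - (2:ℚ_[2])^j * a‖) := by field_simp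
      _ ≤ ((2:ℝ)^j)⁻¹ * 1 := by gcongr
      _ = ((2:ℝ)^j)⁻¹ := mul_one _
  · intro hx
    show ‖(2 : ℚ_[2]) ^ (-j) * x - a‖ ≤ 1
    rw [hfact, norm_mul, norm_two_zpow, neg_neg]
    calc (2:ℝ)^j * ‖x - (2:ℚ_[2])^j * a‖ ≤ (2:ℝ)^j * (2:ℝ)^(-j) := by
          apply mul_le_mul_of_nonneg_left hx (le_of_lt hpos)
      _ = 1 := by rw [← zpow_add₀ (two_ne_zero (α := ℝ))]; ring_nf; simp

lemma measurableSet_Cb [MeasurableSpace ℚ_[2]] [BorelSpace ℚ_[2]] (j : ℤ) (a : ℚ_[2]) :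
    MeasurableSet (Cb j a) := by
  have : Cb j a = (fun x => (2 : ℚ_[2]) ^ (-j) * x - a) ⁻¹' {y | ‖y‖ ≤ 1} := rfl
  rw [this]
  have hcont : Continuous fun x : ℚ_[2] => (2 : ℚ_[2]) ^ (-j) * x - a :=
    (continuous_const.mul continuous_id).sub continuous_const
  have hm : MeasurableSet {y : ℚ_[2] | ‖y‖ ≤ 1} := by
    have : {y : ℚ_[2] | ‖y‖ ≤ 1} = Bz 0 := by simp [Bz]
    rw [this]; exact measurableSet_Bz 0
  exact hm.preimage hcont.measurable

/-- Distinct elements of `I2` are at distance `> 1`. -/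
lemma I2_eq_of_norm_sub_le_one {a b : ℚ_[2]} (ha : a ∈ I2) (hb : b ∈ I2)
    (h : ‖a - b‖ ≤ 1) : a = b := by
  obtain ⟨γ, m, hm, rfl⟩ := ha
  obtain ⟨δ, m', hm', rfl⟩ := hb
  have h2q : (2 : ℚ_[2]) ≠ 0 := two_ne_zero
  set N : ℤ := (m : ℤ) * 2 ^ δ - (m' : ℤ) * 2 ^ γ with hN
  have key : (m : ℚ_[2]) / 2 ^ γ - (m' : ℚ_[2]) / 2 ^ δ = (N : ℚ_[2]) / 2 ^ (γ + δ) := by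
    rw [hN]
    push_cast
    field_simp
    ring
  rw [key] at h
  have hnorm : ‖((2:ℚ_[2]) ^ (γ + δ))‖ = (2:ℝ) ^ (-(γ + δ : ℤ)) := by
    rw [← zpow_natCast (2:ℚ_[2]) (γ + δ), norm_two_zpow]
    push_cast
    ring_nf
  rw [norm_div, hnorm, div_le_one (by positivity)] at h
  have hdvd : ((2:ℤ) ^ (γ + δ)) ∣ N := by
    apply (Padic.norm_int_le_pow_iff_dvd N (γ + δ)).mp
    exact_mod_cast h
  have habs : |N| < 2 ^ (γ + δ) := by
    rw [hN, abs_lt]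
    constructor
    · have h1 : (m' : ℤ) * 2 ^ γ < 2 ^ δ * 2 ^ γ := by
        apply mul_lt_mul_of_pos_right (by exact_mod_cast hm') (by positivity)
      have h2 : (0:ℤ) ≤ (m : ℤ) * 2 ^ δ := by positivity
      have : (2:ℤ) ^ δ * 2 ^ γ = 2 ^ (γ + δ) := by rw [← pow_add]; ring_nf
      omega
    · have h1 : (m : ℤ) * 2 ^ δ < 2 ^ γ * 2 ^ δ := by
        apply mul_lt_mul_of_pos_right (by exact_mod_cast hm) (by positivity)
      have h2 : (0:ℤ) ≤ (m' : ℤ) * 2 ^ γ := by positivity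
      have : (2:ℤ) ^ γ * 2 ^ δ = 2 ^ (γ + δ) := by rw [← pow_add]
      omega
  have hN0 : N = 0 := Int.eq_zero_of_abs_lt_dvd hdvd habs
  have hmm : (m : ℤ) * 2 ^ δ = (m' : ℤ) * 2 ^ γ := by omega
  have hq : (m : ℚ_[2]) * 2 ^ δ = (m' : ℚ_[2]) * 2 ^ γ := by exact_mod_cast hmm
  field_simp
  linear_combination hq

lemma Cb_disjoint {j : ℤ} {a b : ℚ_[2]} (ha : a ∈ I2) (hb : b ∈ I2) (hab : a ≠ b)
    {x : ℚ_[2]} (hxa : x ∈ Cb j a) (hxb : x ∈ Cb j b) : False := by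
  apply hab
  apply I2_eq_of_norm_sub_le_one ha hb
  have hfact : a - b = ((2:ℚ_[2])^(-j) * x - b) - ((2:ℚ_[2])^(-j) * x - a) := by ring
  rw [hfact]
  have := Padic.nonarchimedean ((2:ℚ_[2])^(-j) * x - b) (-((2:ℚ_[2])^(-j) * x - a))
  rw [← sub_eq_add_neg] at this
  calc ‖(2:ℚ_[2])^(-j) * x - b - ((2:ℚ_[2])^(-j) * x - a)‖
      ≤ max ‖(2:ℚ_[2])^(-j) * x - b‖ ‖-((2:ℚ_[2])^(-j) * x - a)‖ := this
    _ ≤ 1 := by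
        rw [norm_neg]
        exact max_le hxb hxa

lemma Bz_subset_Cb {n : ℕ} {j : ℤ} (hjn : (n : ℤ) ≤ -j) {a x : ℚ_[2]}
    (hx : x ∈ Bz n) (hxa : x ∈ Cb j a) : Bz n ⊆ Cb j a := by
  intro y hy
  show ‖(2 : ℚ_[2]) ^ (-j) * y - a‖ ≤ 1
  have hfact : (2 : ℚ_[2]) ^ (-j) * y - a
      = ((2:ℚ_[2])^(-j) * x - a) + (2:ℚ_[2])^(-j) * (y - x) := by ring
  have hyx : ‖y - x‖ ≤ (2:ℝ) ^ (n:ℤ) := by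
    have := Padic.nonarchimedean y (-x)
    rw [← sub_eq_add_neg, norm_neg] at this
    exact this.trans (max_le hy hx)
  have h2 : ‖(2:ℚ_[2])^(-j) * (y - x)‖ ≤ 1 := by
    rw [norm_mul, norm_two_zpow, neg_neg]
    calc (2:ℝ)^j * ‖y - x‖ ≤ (2:ℝ)^j * (2:ℝ)^(n:ℤ) := by
          apply mul_le_mul_of_nonneg_left hyx (by positivity)
      _ ≤ (2:ℝ)^j * (2:ℝ)^(-j) := by
          apply mul_le_mul_of_nonneg_left _ (by positivity)
          exact zpow_le_zpow_right₀ (by norm_num) hjn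
      _ = 1 := by rw [← zpow_add₀ (two_ne_zero (α := ℝ))]; ring_nf; simp
  rw [hfact]
  have := Padic.nonarchimedean ((2:ℚ_[2])^(-j) * x - a) ((2:ℚ_[2])^(-j) * (y - x))
  exact this.trans (max_le hxa h2)


section Meas

variable [MeasurableSpace ℚ_[2]] [BorelSpace ℚ_[2]]
variable (μ : Measure ℚ_[2]) [μ.IsAddHaarMeasure]

lemma Bz_doubling (k : ℤ) : μ (Bz (k + 1)) = 2 * μ (Bz k) := by
  set t : ℚ_[2] := (2:ℚ_[2]) ^ (-(k+1)) with ht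
  have htn : ‖t‖ = (2:ℝ) ^ (k+1) := by rw [ht, norm_two_zpow, neg_neg]
  have hk1 : (2:ℝ) ^ k < (2:ℝ) ^ (k+1) := by
    gcongr
    · norm_num
    · omega
  have hdecomp : Bz (k+1) = Bz k ∪ ((fun x => -t + x) ⁻¹' Bz k) := by
    ext x
    simp only [Bz, Set.mem_union, Set.mem_preimage, Set.mem_setOf_eq, neg_add_eq_sub]
    constructor
    · intro hx
      by_cases h : ‖x‖ ≤ (2:ℝ) ^ k
      · exact Or.inl h
      · exact Or.inr (norm_sub_le_of_between hx h)
    · rintro (h | h)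
      · linarith
      · have hmax : ‖x‖ ≤ max ‖x - t‖ ‖t‖ := by
          have := Padic.nonarchimedean (x - t) t
          simpa using this
        have : max ‖x - t‖ ‖t‖ ≤ (2:ℝ) ^ (k+1) := by
          apply max_le (by linarith) (le_of_eq htn)
        linarith
  have hdisj : Disjoint (Bz k) ((fun x => -t + x) ⁻¹' Bz k) := by
    rw [Set.disjoint_left]
    intro x hx hx'
    simp only [Bz, Set.mem_preimage, Set.mem_setOf_eq, neg_add_eq_sub] at hx hx'
    have hmax : ‖t‖ ≤ max ‖x‖ ‖t - x‖ := by
      have h := Padic.nonarchimedean x (t - x)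
      simpa using h
    rw [norm_sub_rev] at hmax
    have hle : ‖t‖ ≤ (2:ℝ) ^ k := hmax.trans (max_le hx hx')
    rw [htn] at hle; linarith
  rw [hdecomp, measure_union hdisj ((measurableSet_Bz k).preimage (measurable_id.const_add (-t))),
    measure_preimage_add μ (-t) (Bz k), two_mul]

lemma meas_Bz (hμ : μ {x : ℚ_[2] | ‖x‖ ≤ 1} = 1) (k : ℤ) : μ (Bz k) = 2 ^ k := by
  induction k using Int.induction_on with
  | zero => simpa [Bz] using hμ
  | succ k ih =>
      rw [Bz_doubling μ k, ih, show ((k:ℤ)+1) = 1 + (k:ℤ) by ring,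
        ENNReal.zpow_add (by norm_num) (by norm_num) 1 (k:ℤ), zpow_one]
  | pred k ih =>
      have hd := Bz_doubling μ (-(k:ℤ) - 1)
      have harg : (-(k:ℤ) - 1) + 1 = -(k:ℤ) := by ring
      rw [harg, ih] at hd
      have h2 : 2 * (2:ℝ≥0∞) ^ (-(k:ℤ) - 1) = 2 ^ (-(k:ℤ)) := by
        calc 2 * (2:ℝ≥0∞) ^ (-(k:ℤ)-1) = 2 ^ (1:ℤ) * 2 ^ (-(k:ℤ)-1) := by rw [zpow_one]
          _ = 2 ^ (1 + (-(k:ℤ)-1)) :=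
              (ENNReal.zpow_add (by norm_num) (by norm_num) 1 (-(k:ℤ) - 1)).symm
          _ = 2 ^ (-(k:ℤ)) := by congr 1; ring
      rw [← h2] at hd
      exact (ENNReal.mul_right_inj (by norm_num) (by norm_num)).mp hd.symm

lemma meas_Cb (hμ : μ {x : ℚ_[2] | ‖x‖ ≤ 1} = 1) (j : ℤ) (a : ℚ_[2]) :
    μ (Cb j a) = 2 ^ (-j) := by
  have : Cb j a = (fun x => -((2:ℚ_[2])^j * a) + x) ⁻¹' Bz (-j) := by
    ext x
    simp only [Set.mem_preimage, Bz, Set.mem_setOf_eq, neg_add_eq_sub]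
    rw [norm_sub_rev]
    have := mem_Cb_iff (j := j) (a := a) (x := x)
    rw [norm_sub_rev x ((2:ℚ_[2])^j * a)] at this
    exact this
  rw [this, measure_preimage_add μ _ (Bz (-j)), meas_Bz μ hμ]


noncomputable def psi (j : ℤ) (a : ℚ_[2]) : ℚ_[2] → ℂ := (Cb j a).indicator 1

lemma phi2_comp (j : ℤ) (a : ℚ_[2]) :
    (fun x => phi2 ((2 : ℚ_[2]) ^ (-j) * x - a)) = psi j a := by
  funext x
  simp only [phi2, psi, Set.indicator_apply, Set.mem_setOf_eq, Cb, Pi.one_apply]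

lemma two_zpow_rpow (k : ℤ) (r : ℝ) :
    ((2:ℝ≥0∞) ^ k) ^ r = (2:ℝ≥0∞) ^ ((k:ℝ) * r) := by
  rw [← ENNReal.rpow_intCast 2 k, ← ENNReal.rpow_mul]

lemma core (hμ : μ {x : ℚ_[2] | ‖x‖ ≤ 1} = 1) {j : ℤ} {n : ℕ} (hjn : (n:ℤ) ≤ -j)
    {ι : Type*} (u : Finset ι) (aF : ι → ℚ_[2]) (hmem : ∀ i ∈ u, aF i ∈ I2)
    (hinj : Set.InjOn aF u) (c : ι → ℂ) :
    eLpNorm (fun x => ∑ i ∈ u, c i • psi j (aF i) x) 2 (μ.restrict (Bz (n:ℤ)))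
      ≤ (2:ℝ≥0∞) ^ (((n:ℝ) + (j:ℝ))/2) *
        eLpNorm (fun x => ∑ i ∈ u, c i • psi j (aF i) x) 2 μ := by
  classical
  set G : ℚ_[2] → ℂ := fun x => ∑ i ∈ u, c i • psi j (aF i) x with hG
  by_cases hex : ∃ i ∈ u, ∃ x, x ∈ Bz (n:ℤ) ∧ x ∈ Cb j (aF i)
  · obtain ⟨i₀, hi₀, x₀, hx₀B, hx₀C⟩ := hex
    have hsub : Bz (n:ℤ) ⊆ Cb j (aF i₀) := Bz_subset_Cb hjn hx₀B hx₀C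
    have hconst : ∀ x ∈ Cb j (aF i₀), G x = c i₀ := by
      intro x hx
      show (∑ i ∈ u, c i • psi j (aF i) x) = c i₀
      rw [Finset.sum_eq_single i₀]
      · simp [psi, Set.indicator_of_mem hx]
      · intro i hiu hne
        have hnot : x ∉ Cb j (aF i) := fun hx' =>
          Cb_disjoint (hmem i hiu) (hmem i₀ hi₀) (fun h => hne (hinj hiu hi₀ h)) hx' hx
        simp [psi, Set.indicator_of_notMem hnot]
      · intro h; exact absurd hi₀ h
    have hresB : μ.restrict (Bz (n:ℤ)) ≠ 0 := by
      rw [Ne, Measure.restrict_eq_zero, meas_Bz μ hμ]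
      exact (ENNReal.zpow_pos (by norm_num) (by norm_num) _).ne'
    have hresC : μ.restrict (Cb j (aF i₀)) ≠ 0 := by
      rw [Ne, Measure.restrict_eq_zero, meas_Cb μ hμ]
      exact (ENNReal.zpow_pos (by norm_num) (by norm_num) _).ne'
    have hB : G =ᵐ[μ.restrict (Bz (n:ℤ))] fun _ => c i₀ := by
      filter_upwards [ae_restrict_mem (measurableSet_Bz (n:ℤ))] with x hx
      exact hconst x (hsub hx)
    have hC : G =ᵐ[μ.restrict (Cb j (aF i₀))] fun _ => c i₀ := by
      filter_upwards [ae_restrict_mem (measurableSet_Cb j (aF i₀))] with x hx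
      exact hconst x hx
    have e1 : eLpNorm G 2 (μ.restrict (Bz (n:ℤ)))
        = (‖c i₀‖₊ : ℝ≥0∞) * (2:ℝ≥0∞) ^ (((n:ℤ):ℝ) * (1/2)) := by
      rw [eLpNorm_congr_ae hB, eLpNorm_const _ (by norm_num) hresB,
        Measure.restrict_apply_univ, meas_Bz μ hμ, two_zpow_rpow]
      norm_num
      rfl
    have e2 : eLpNorm G 2 (μ.restrict (Cb j (aF i₀)))
        = (‖c i₀‖₊ : ℝ≥0∞) * (2:ℝ≥0∞) ^ (((-j:ℤ):ℝ) * (1/2)) := by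
      rw [eLpNorm_congr_ae hC, eLpNorm_const _ (by norm_num) hresC,
        Measure.restrict_apply_univ, meas_Cb μ hμ, two_zpow_rpow]
      norm_num
      rfl
    calc eLpNorm G 2 (μ.restrict (Bz (n:ℤ)))
        = (‖c i₀‖₊ : ℝ≥0∞) * (2:ℝ≥0∞) ^ (((n:ℤ):ℝ) * (1/2)) := e1
      _ = (2:ℝ≥0∞) ^ (((n:ℝ) + (j:ℝ))/2)
          * ((‖c i₀‖₊ : ℝ≥0∞) * (2:ℝ≥0∞) ^ (((-j:ℤ):ℝ) * (1/2))) := by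
          rw [show (2:ℝ≥0∞) ^ (((n:ℝ) + (j:ℝ))/2)
                * ((‖c i₀‖₊ : ℝ≥0∞) * (2:ℝ≥0∞) ^ (((-j:ℤ):ℝ) * (1/2)))
              = (‖c i₀‖₊ : ℝ≥0∞) * ((2:ℝ≥0∞) ^ (((n:ℝ) + (j:ℝ))/2)
                * (2:ℝ≥0∞) ^ (((-j:ℤ):ℝ) * (1/2))) from by ring,
            ← ENNReal.rpow_add _ _ (by norm_num) (by norm_num)]
          congr 2
          push_cast
          ring
      _ = (2:ℝ≥0∞) ^ (((n:ℝ) + (j:ℝ))/2) * eLpNorm G 2 (μ.restrict (Cb j (aF i₀))) := by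
          rw [e2]
      _ ≤ (2:ℝ≥0∞) ^ (((n:ℝ) + (j:ℝ))/2) * eLpNorm G 2 μ := by
          gcongr
          exact Measure.restrict_le_self
  · push_neg at hex
    have hG0 : G =ᵐ[μ.restrict (Bz (n:ℤ))] 0 := by
      filter_upwards [ae_restrict_mem (measurableSet_Bz (n:ℤ))] with x hx
      show (∑ i ∈ u, c i • psi j (aF i) x) = 0
      apply Finset.sum_eq_zero
      intro i hi
      have hnot : x ∉ Cb j (aF i) := by
        intro hc
        have h' := hex i hi x
        exact (h' hx) hc
      simp [psi, Set.indicator_of_notMem hnot]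
    rw [eLpNorm_congr_ae hG0, eLpNorm_zero]
    exact zero_le


lemma lip (n : ℤ) :
    LipschitzWith 1 (fun g : Lp ℂ 2 μ =>
      (eLpNorm (g : ℚ_[2] → ℂ) 2 (μ.restrict (Bz n))).toReal) := by
  have hfin : ∀ g : Lp ℂ 2 μ, eLpNorm (g : ℚ_[2] → ℂ) 2 (μ.restrict (Bz n)) ≠ ∞ :=
    fun g => ((eLpNorm_mono_measure _ Measure.restrict_le_self).trans_lt
      (Lp.eLpNorm_lt_top g)).ne
  have key : ∀ g h : Lp ℂ 2 μ,
      eLpNorm (g : ℚ_[2] → ℂ) 2 (μ.restrict (Bz n))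
        ≤ eLpNorm (h : ℚ_[2] → ℂ) 2 (μ.restrict (Bz n)) + edist g h := by
    intro g h
    have hgh : (g : ℚ_[2] → ℂ) = (h : ℚ_[2] → ℂ) + ((g : ℚ_[2] → ℂ) - (h : ℚ_[2] → ℂ)) := by
      funext x; simp
    calc eLpNorm (g : ℚ_[2] → ℂ) 2 (μ.restrict (Bz n))
        = eLpNorm ((h : ℚ_[2] → ℂ) + ((g : ℚ_[2] → ℂ) - (h : ℚ_[2] → ℂ))) 2
            (μ.restrict (Bz n)) := by rw [← hgh]
      _ ≤ eLpNorm (h : ℚ_[2] → ℂ) 2 (μ.restrict (Bz n))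
          + eLpNorm ((g : ℚ_[2] → ℂ) - (h : ℚ_[2] → ℂ)) 2 (μ.restrict (Bz n)) :=
          eLpNorm_add_le ((Lp.aestronglyMeasurable h).restrict)
            (((Lp.aestronglyMeasurable g).sub (Lp.aestronglyMeasurable h)).restrict)
            one_le_two
      _ ≤ eLpNorm (h : ℚ_[2] → ℂ) 2 (μ.restrict (Bz n))
          + eLpNorm ((g : ℚ_[2] → ℂ) - (h : ℚ_[2] → ℂ)) 2 μ :=
          add_le_add le_rfl (eLpNorm_mono_measure _ Measure.restrict_le_self)
      _ = eLpNorm (h : ℚ_[2] → ℂ) 2 (μ.restrict (Bz n)) + edist g h := by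
          rw [Lp.edist_def]
  apply LipschitzWith.of_dist_le_mul
  intro g h
  rw [NNReal.coe_one, one_mul, Real.dist_eq, abs_sub_le_iff]
  have htr : ∀ g h : Lp ℂ 2 μ,
      (eLpNorm (g : ℚ_[2] → ℂ) 2 (μ.restrict (Bz n))).toReal
        ≤ (eLpNorm (h : ℚ_[2] → ℂ) 2 (μ.restrict (Bz n))).toReal + dist g h := by
    intro g h
    have h1 := ENNReal.toReal_mono
      (ENNReal.add_ne_top.mpr ⟨hfin h, edist_ne_top g h⟩) (key g h)
    rwa [ENNReal.toReal_add (hfin h) (edist_ne_top g h), ← dist_edist] at h1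
  constructor
  · have := htr g h
    linarith
  · have := htr h g
    rw [dist_comm] at this
    linarith

lemma coeFn_finsum (s : Finset (Lp ℂ 2 μ)) (b : Lp ℂ 2 μ → ℂ) :
    ((∑ i ∈ s, b i • i : Lp ℂ 2 μ) : ℚ_[2] → ℂ)
      =ᵐ[μ] fun x => ∑ i ∈ s, b i • (i : ℚ_[2] → ℂ) x := by
  classical
  induction s using Finset.induction_on with
  | empty =>
      simp only [Finset.sum_empty]
      filter_upwards [Lp.coeFn_zero (E := ℂ) (p := 2) (μ := μ)] with x hx
      simpa using hx
  | @insert a s hnotmem ih =>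
      rw [Finset.sum_insert hnotmem]
      filter_upwards [Lp.coeFn_add (b a • a) (∑ i ∈ s, b i • i),
        Lp.coeFn_smul (b a) a, ih] with x hx1 hx2 hx3
      rw [Finset.sum_insert hnotmem]
      simp only [Pi.add_apply] at hx1
      rw [hx1, hx2, hx3]
      rfl


end Meas

end VspAux

theorem Vsp_inter_trivial [MeasurableSpace ℚ_[2]] [BorelSpace ℚ_[2]]
    (μ : Measure ℚ_[2]) [μ.IsAddHaarMeasure]
    (hμ : μ {x : ℚ_[2] | ‖x‖ ≤ 1} = 1) :
    (⨅ j : ℤ, Vsp μ j) = ⊥ := by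
  classical
  rw [eq_bot_iff]
  intro f hf
  rw [Submodule.mem_bot]
  rw [Submodule.mem_iInf] at hf
  have key : ∀ (n : ℕ) (j : ℤ), (n:ℤ) ≤ -j →
      (eLpNorm (f : ℚ_[2] → ℂ) 2 (μ.restrict (VspAux.Bz (n:ℤ)))).toReal
        ≤ (2:ℝ) ^ (((n:ℝ) + (j:ℝ))/2) * ‖f‖ := by
    intro n j hjn
    set S : Set (Lp ℂ 2 μ) := {g | ∃ a ∈ I2,
      (g : ℚ_[2] → ℂ) =ᵐ[μ] fun x => phi2 ((2 : ℚ_[2]) ^ (-j) * x - a)} with hS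
    set F : Set (Lp ℂ 2 μ) := {g |
      (eLpNorm (g : ℚ_[2] → ℂ) 2 (μ.restrict (VspAux.Bz (n:ℤ)))).toReal
        ≤ (2:ℝ) ^ (((n:ℝ) + (j:ℝ))/2) * ‖g‖} with hF
    have hFclosed : IsClosed F := by
      apply isClosed_le
      · exact (VspAux.lip μ (n:ℤ)).continuous
      · exact continuous_const.mul continuous_norm
    have hCne : (2:ℝ≥0∞) ^ (((n:ℝ) + (j:ℝ))/2) ≠ ∞ := by
      simp [ENNReal.rpow_eq_top_iff]
    have hCtoReal : ((2:ℝ≥0∞) ^ (((n:ℝ) + (j:ℝ))/2)).toReal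
        = (2:ℝ) ^ (((n:ℝ) + (j:ℝ))/2) := by
      rw [← ENNReal.toReal_rpow]
      norm_num
    have hspan : (Submodule.span ℂ S : Set (Lp ℂ 2 μ)) ⊆ F := by
      intro g hg
      obtain ⟨co, hsupp, rfl⟩ := Submodule.mem_span_set.mp hg
      have hrep : ∀ i : Lp ℂ 2 μ, i ∈ co.support →
          ∃ a, a ∈ I2 ∧ (i : ℚ_[2] → ℂ) =ᵐ[μ] VspAux.psi j a := by
        intro i hi
        obtain ⟨a, haI, haeq⟩ := hsupp hi
        exact ⟨a, haI, by rw [← VspAux.phi2_comp]; exact haeq⟩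
      choose! aF haI hae using hrep
      have hinj : Set.InjOn aF co.support := by
        intro i hi i' hi' hii
        apply Lp.ext ((hae i hi).trans _)
        rw [hii]
        exact (hae i' hi').symm
      have hco : (co.sum fun mi r => r • mi : Lp ℂ 2 μ) = ∑ i ∈ co.support, co i • i := rfl
      have hsum : ((co.sum fun mi r => r • mi : Lp ℂ 2 μ) : ℚ_[2] → ℂ)
          =ᵐ[μ] fun x => ∑ i ∈ co.support, co i • VspAux.psi j (aF i) x := by
        rw [hco]
        refine (VspAux.coeFn_finsum μ co.support (fun i => co i)).trans ?_
        have hall : ∀ᵐ x ∂μ, ∀ i ∈ co.support, (i : ℚ_[2] → ℂ) x = VspAux.psi j (aF i) x :=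
          (Filter.eventually_all_finset _).mpr (fun i hi => hae i hi)
        filter_upwards [hall] with x hx
        exact Finset.sum_congr rfl fun i hi => by rw [hx i hi]
      set G := fun x => ∑ i ∈ co.support, co i • VspAux.psi j (aF i) x with hGdef
      have hcore := VspAux.core μ hμ hjn co.support aF (fun i hi => haI i hi) hinj
        (fun i => co i)
      have e1 : eLpNorm ((co.sum fun mi r => r • mi : Lp ℂ 2 μ) : ℚ_[2] → ℂ) 2
          (μ.restrict (VspAux.Bz (n:ℤ))) = eLpNorm G 2 (μ.restrict (VspAux.Bz (n:ℤ))) :=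
        eLpNorm_congr_ae (hsum.filter_mono (ae_mono Measure.restrict_le_self))
      have e2 : eLpNorm ((co.sum fun mi r => r • mi : Lp ℂ 2 μ) : ℚ_[2] → ℂ) 2 μ
          = eLpNorm G 2 μ := eLpNorm_congr_ae hsum
      show (eLpNorm ((co.sum fun mi r => r • mi : Lp ℂ 2 μ) : ℚ_[2] → ℂ) 2
          (μ.restrict (VspAux.Bz (n:ℤ)))).toReal
        ≤ (2:ℝ) ^ (((n:ℝ) + (j:ℝ))/2) * ‖(co.sum fun mi r => r • mi : Lp ℂ 2 μ)‖
      calc (eLpNorm ((co.sum fun mi r => r • mi : Lp ℂ 2 μ) : ℚ_[2] → ℂ) 2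
            (μ.restrict (VspAux.Bz (n:ℤ)))).toReal
          = (eLpNorm G 2 (μ.restrict (VspAux.Bz (n:ℤ)))).toReal := by rw [e1]
        _ ≤ ((2:ℝ≥0∞) ^ (((n:ℝ) + (j:ℝ))/2) * eLpNorm G 2 μ).toReal :=
            ENNReal.toReal_mono
              (ENNReal.mul_ne_top hCne (by rw [← e2]; exact Lp.eLpNorm_ne_top _)) hcore
        _ = (2:ℝ) ^ (((n:ℝ) + (j:ℝ))/2) * ‖(co.sum fun mi r => r • mi : Lp ℂ 2 μ)‖ := by
            rw [ENNReal.toReal_mul, hCtoReal, ← e2, Lp.norm_def]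
    have hsubset : (Vsp μ j : Set (Lp ℂ 2 μ)) ⊆ F := by
      rw [Vsp, Submodule.topologicalClosure_coe]
      exact closure_minimal (by exact hspan) hFclosed
    exact hsubset (hf j)
  have key2 : ∀ n k : ℕ, (eLpNorm (f : ℚ_[2] → ℂ) 2 (μ.restrict (VspAux.Bz (n:ℤ)))).toReal
      ≤ (2⁻¹:ℝ)^k * ‖f‖ := by
    intro n k
    have h := key n (-(n:ℤ) - 2*k) (by omega)
    have hexp : (((n:ℝ) + (((-(n:ℤ) - 2*k : ℤ)):ℝ))/2) = -(k:ℝ) := by push_cast; ring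
    rw [hexp, Real.rpow_neg (by norm_num), Real.rpow_natCast, ← inv_pow] at h
    exact h
  have hzero : ∀ n : ℕ, eLpNorm (f : ℚ_[2] → ℂ) 2 (μ.restrict (VspAux.Bz (n:ℤ))) = 0 := by
    intro n
    have hfin : eLpNorm (f : ℚ_[2] → ℂ) 2 (μ.restrict (VspAux.Bz (n:ℤ))) ≠ ∞ :=
      ((eLpNorm_mono_measure _ Measure.restrict_le_self).trans_lt (Lp.eLpNorm_lt_top f)).ne
    have htends : Filter.Tendsto (fun k : ℕ => (2⁻¹:ℝ)^k * ‖f‖) Filter.atTop (nhds 0) := by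
      rw [show (0:ℝ) = 0 * ‖f‖ by ring]
      exact (tendsto_pow_atTop_nhds_zero_of_lt_one (by norm_num) (by norm_num)).mul_const _
    have hle0 : (eLpNorm (f : ℚ_[2] → ℂ) 2 (μ.restrict (VspAux.Bz (n:ℤ)))).toReal ≤ 0 :=
      ge_of_tendsto' htends (fun k => key2 n k)
    have heq0 : (eLpNorm (f : ℚ_[2] → ℂ) 2 (μ.restrict (VspAux.Bz (n:ℤ)))).toReal = 0 :=
      le_antisymm hle0 ENNReal.toReal_nonneg
    rcases (ENNReal.toReal_eq_zero_iff _).mp heq0 with h | h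
    · exact h
    · exact absurd h hfin
  have hae0 : ∀ n : ℕ, ∀ᵐ x ∂μ, x ∈ VspAux.Bz (n:ℤ) → (f : ℚ_[2] → ℂ) x = 0 := by
    intro n
    have h := (eLpNorm_eq_zero_iff ((Lp.aestronglyMeasurable f).restrict)
      (by norm_num)).mp (hzero n)
    have h' := (ae_restrict_iff' (VspAux.measurableSet_Bz (n:ℤ))).mp h
    filter_upwards [h'] with x hx hmem
    simpa using hx hmem
  have hfae : (f : ℚ_[2] → ℂ) =ᵐ[μ] 0 := by
    have hall := MeasureTheory.ae_all_iff.mpr hae0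
    filter_upwards [hall] with x hx
    obtain ⟨n, hn⟩ : ∃ n : ℕ, ‖x‖ ≤ (2:ℝ)^(n:ℤ) := by
      obtain ⟨n, hn⟩ := exists_nat_ge ‖x‖
      refine ⟨n, hn.trans ?_⟩
      rw [zpow_natCast]
      exact_mod_cast (Nat.lt_two_pow_self (n := n)).le
    exact hx n hn
  exact Lp.ext (hfae.trans (Lp.coeFn_zero ℂ 2 μ).symm)
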